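/- Let (X, 𝒞) be a (crisp) convex space and define ω_L(𝒞) to be the family of all directed suprema of L-fuzzy sets of the form â ⊓ χ_C with a ∈ L and C ∈ 𝒞 (where χ_C is the {⊥,⊤}-valued characteristic map of C). Then ω_L(𝒞) is a stratified L-convex structure on X. -/
import Mathlib


open scoped Classical

variable {L X : Type*}

def IsLConvex [CompleteLattice L] {X : Type*} (𝒞 : Set (X → L)) : Prop :=
  (fun _ => (⊤ : L)) ∈ 𝒞 ∧ (fun _ => (⊥ : L)) ∈ 𝒞 ∧
  (∀ S : Set (X → L), S ⊆ 𝒞 → sInf S ∈ 𝒞) ∧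
  (∀ S : Set (X → L), S ⊆ 𝒞 → DirectedOn (· ≤ ·) S → sSup S ∈ 𝒞)

def IsStratified [CompleteLattice L] {X : Type*} (𝒞 : Set (X → L)) : Prop :=
  ∀ a : L, (fun _ => a) ∈ 𝒞

def IsConvex {X : Type*} (𝒞 : Set (Set X)) : Prop :=
  ∅ ∈ 𝒞 ∧ Set.univ ∈ 𝒞 ∧
  (∀ S : Set (Set X), S ⊆ 𝒞 → ⋂₀ S ∈ 𝒞) ∧
  (∀ S : Set (Set X), S ⊆ 𝒞 → DirectedOn (· ⊆ ·) S → ⋃₀ S ∈ 𝒞)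

noncomputable def chiSet [CompleteLattice L] {X : Type*} (C : Set X) : X → L :=
  fun x => if x ∈ C then ⊤ else ⊥

def omegaBase (L : Type*) [CompleteLattice L] {X : Type*} (𝒞 : Set (Set X)) :
    Set (X → L) :=
  {A | ∃ a : L, ∃ C ∈ 𝒞, A = fun x => a ⊓ chiSet C x}

/-- `ω_L(𝒞)`: all directed suprema of basic elements `â ⊓ χ_C`. -/
def omegaL (L : Type*) [CompleteLattice L] {X : Type*} (𝒞 : Set (Set X)) :
    Set (X → L) :=
  {A | ∃ S ⊆ omegaBase L 𝒞, DirectedOn (· ≤ ·) S ∧ A = sSup S}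

/-! ### Auxiliary material: the totally-below relation -/

section TotallyBelow

variable [CompletelyDistribLattice L]

/-- `TB a b`: `a` is totally below `b`. -/
def TB (a b : L) : Prop := ∀ S : Set L, b ≤ sSup S → ∃ s ∈ S, a ≤ s

lemma TB.le {a b : L} (h : TB a b) : a ≤ b := by
  obtain ⟨s, hs, hle⟩ := h {b} (by simp)
  simp only [Set.mem_singleton_iff] at hs
  exact hs ▸ hle

lemma TB.mono_left {a a' b : L} (h : a' ≤ a) (h2 : TB a b) : TB a' b :=
  fun S hS => let ⟨s, hs, hle⟩ := h2 S hS; ⟨s, hs, h.trans hle⟩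

lemma TB.mono_right {a b b' : L} (h : TB a b) (h2 : b ≤ b') : TB a b' :=
  fun S hS => h S (h2.trans hS)

lemma le_sSup_TB (b : L) : b ≤ sSup {c | TB c b} := by
  by_cases hb : b = ⊥
  · exact hb ▸ bot_le
  · have h1 : b ≤ ⨅ S : {S : Set L // b ≤ sSup S ∧ S.Nonempty}, ⨆ x : S.1, (x : L) := by
      refine le_iInf fun S => ?_
      rw [← sSup_eq_iSup']
      exact S.2.1
    rw [iInf_iSup_eq] at h1
    refine h1.trans (iSup_le fun g => le_sSup ?_)
    intro T hT
    have hTne : T.Nonempty := by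
      rcases Set.eq_empty_or_nonempty T with hemp | hne
      · exfalso; apply hb
        subst hemp
        simpa using le_antisymm (by simpa using hT) bot_le
      · exact hne
    exact ⟨(g ⟨T, hT, hTne⟩ : T), (g ⟨T, hT, hTne⟩).2, iInf_le _ _⟩

lemma le_of_forall_TB_le {a z : L} (H : ∀ c, TB c a → c ≤ z) : a ≤ z :=
  (le_sSup_TB a).trans (sSup_le H)

lemma TB.interpolate {a b : L} (h : TB a b) : ∃ c, TB a c ∧ TB c b := by
  have hb : b ≤ sSup {x | ∃ c, TB x c ∧ TB c b} := by
    refine (le_sSup_TB b).trans (sSup_le fun c hc => ?_)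
    exact (le_sSup_TB c).trans (sSup_le fun x hx => le_sSup ⟨c, hx, hc⟩)
  obtain ⟨x, ⟨c, hxc, hcb⟩, hax⟩ := h _ hb
  exact ⟨c, TB.mono_left hax hxc, hcb⟩

lemma exists_TB_ne_bot {b : L} (hb : b ≠ ⊥) : ∃ c, TB c b ∧ c ≠ ⊥ := by
  by_contra hcon
  push_neg at hcon
  apply hb
  have h2 : sSup {c | TB c b} ≤ ⊥ := sSup_le fun c hc => by
    by_cases hc' : c = ⊥
    · exact hc'.le
    · exact absurd (hcon c hc) hc'
  exact le_antisymm ((le_sSup_TB b).trans h2) bot_le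

end TotallyBelow

/-! ### Basic elements -/

section BElem

variable [CompleteLattice L]

noncomputable def bElem (a : L) (C : Set X) : X → L := fun x => a ⊓ chiSet C x

lemma bElem_apply_mem {a : L} {C : Set X} {x : X} (hx : x ∈ C) : bElem a C x = a := by
  simp [bElem, chiSet, hx]

lemma bElem_apply_not_mem {a : L} {C : Set X} {x : X} (hx : x ∉ C) :
    bElem a C x = (⊥ : L) := by
  simp [bElem, chiSet, hx]

lemma bElem_le_iff {a : L} {C : Set X} {A : X → L} :
    bElem a C ≤ A ↔ ∀ x ∈ C, a ≤ A x := by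
  constructor
  · intro hle x hx
    have := hle x
    rwa [bElem_apply_mem hx] at this
  · intro H x
    by_cases hx : x ∈ C
    · rw [bElem_apply_mem hx]; exact H x hx
    · rw [bElem_apply_not_mem hx]; exact bot_le

lemma bElem_mono {a b : L} {C D : Set X} (hab : a ≤ b) (hCD : C ⊆ D) :
    bElem a C ≤ bElem b D := by
  rw [bElem_le_iff]
  intro x hx
  rw [bElem_apply_mem (hCD hx)]
  exact hab

lemma bElem_mem_base {𝒞 : Set (Set X)} {a : L} {C : Set X} (hC : C ∈ 𝒞) :
    bElem a C ∈ omegaBase L 𝒞 := ⟨a, C, hC, rfl⟩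

lemma bElem_bot_left {C : Set X} : bElem (⊥ : L) C = fun _ => (⊥ : L) := by
  funext x; simp [bElem]

lemma bElem_empty {a : L} : bElem a (∅ : Set X) = fun _ => (⊥ : L) := by
  funext x; simp [bElem, chiSet]

/-- from `bElem a C ≤ bElem e K` with `a ≠ ⊥` we get `C ⊆ K` and (if `C` nonempty) `a ≤ e`. -/
lemma bElem_le_bElem {a e : L} {C K : Set X} (hle : bElem a C ≤ bElem e K)
    (ha : a ≠ ⊥) : C ⊆ K ∧ (C.Nonempty → a ≤ e) := by
  have hsub : C ⊆ K := by
    intro x hx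
    by_contra hxK
    have := bElem_le_iff.1 hle x hx
    rw [bElem_apply_not_mem hxK] at this
    exact ha (le_bot_iff.1 this)
  refine ⟨hsub, fun ⟨x, hx⟩ => ?_⟩
  have := bElem_le_iff.1 hle x hx
  rwa [bElem_apply_mem (hsub hx)] at this

end BElem

/-! ### Hulls -/

section Hull

variable {𝒞 : Set (Set X)}

def hull (𝒞 : Set (Set X)) (Y : Set X) : Set X := ⋂₀ {K | K ∈ 𝒞 ∧ Y ⊆ K}

lemma hull_mem (h : IsConvex 𝒞) (Y : Set X) : hull 𝒞 Y ∈ 𝒞 :=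
  h.2.2.1 _ (fun _ hK => hK.1)

lemma subset_hull (𝒞 : Set (Set X)) (Y : Set X) : Y ⊆ hull 𝒞 Y :=
  fun x hx => Set.mem_sInter.2 fun _ hK => hK.2 hx

lemma hull_subset {K Y : Set X} (hK : K ∈ 𝒞) (hYK : Y ⊆ K) : hull 𝒞 Y ⊆ K :=
  Set.sInter_subset_of_mem ⟨hK, hYK⟩

end Hull

/-! ### The characterization `Omega` of `omegaL` -/

section Omega

variable [CompletelyDistribLattice L] {𝒞 : Set (Set X)}

/-- all basic elements below `A`. -/
def DSet (𝒞 : Set (Set X)) (A : X → L) : Set (X → L) :=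
  {f | f ∈ omegaBase L 𝒞 ∧ f ≤ A}

/-- join-compatibility on hulls. -/
def PropP (𝒞 : Set (Set X)) (A : X → L) : Prop :=
  ∀ a b : L, ∀ C D : Set X, C ∈ 𝒞 → D ∈ 𝒞 → C.Nonempty → D.Nonempty →
    a ≠ ⊥ → b ≠ ⊥ → bElem a C ≤ A → bElem b D ≤ A →
    bElem (a ⊔ b) (hull 𝒞 (C ∪ D)) ≤ A

def PropQ (𝒞 : Set (Set X)) (A : X → L) : Prop := sSup (DSet 𝒞 A) = A

def Omega (𝒞 : Set (Set X)) : Set (X → L) := {A | PropP 𝒞 A ∧ PropQ 𝒞 A}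

lemma base_subset_Omega (h : IsConvex 𝒞) : omegaBase L 𝒞 ⊆ Omega 𝒞 := by
  rintro f ⟨e, K, hK, rfl⟩
  have hfb : (fun x => e ⊓ chiSet K x) = bElem e K := rfl
  rw [hfb]
  constructor
  · intro a b C D hC hD hCne hDne ha hb hfa hfb
    obtain ⟨hCK, hae⟩ := bElem_le_bElem hfa ha
    obtain ⟨hDK, hbe⟩ := bElem_le_bElem hfb hb
    have hhull : hull 𝒞 (C ∪ D) ⊆ K := hull_subset hK (Set.union_subset hCK hDK)
    rw [bElem_le_iff]
    intro x hx
    rw [bElem_apply_mem (hhull hx)]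
    exact sup_le (hae hCne) (hbe hDne)
  · exact le_antisymm (sSup_le fun g hg => hg.2) (le_sSup ⟨bElem_mem_base hK, le_rfl⟩)

lemma Omega_directedOn (h : IsConvex 𝒞) {A : X → L} (hA : A ∈ Omega 𝒞) :
    DirectedOn (· ≤ ·) (DSet 𝒞 A) := by
  intro f hf g hg
  by_cases hfg : f ≤ g
  · exact ⟨g, hg, hfg, le_rfl⟩
  by_cases hgf : g ≤ f
  · exact ⟨f, hf, le_rfl, hgf⟩
  obtain ⟨a, C, hC, hfeq⟩ := hf.1
  obtain ⟨b, D, hD, hgeq⟩ := hg.1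
  have hfeq' : f = bElem a C := hfeq
  have hgeq' : g = bElem b D := hgeq
  have ha : a ≠ ⊥ := by
    rintro rfl
    exact hfg (by rw [hfeq', bElem_bot_left]; intro x; exact bot_le)
  have hb : b ≠ ⊥ := by
    rintro rfl
    exact hgf (by rw [hgeq', bElem_bot_left]; intro x; exact bot_le)
  have hCne : C.Nonempty := by
    rcases Set.eq_empty_or_nonempty C with rfl | hne
    · exact absurd (by rw [hfeq', bElem_empty]; intro x; exact bot_le : f ≤ g) hfg
    · exact hne
  have hDne : D.Nonempty := by
    rcases Set.eq_empty_or_nonempty D with rfl | hne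
    · exact absurd (by rw [hgeq', bElem_empty]; intro x; exact bot_le : g ≤ f) hgf
    · exact hne
  have hfa : bElem a C ≤ A := hfeq' ▸ hf.2
  have hgb : bElem b D ≤ A := hgeq' ▸ hg.2
  have hP := hA.1 a b C D hC hD hCne hDne ha hb hfa hgb
  refine ⟨bElem (a ⊔ b) (hull 𝒞 (C ∪ D)), ⟨bElem_mem_base (hull_mem h _), hP⟩, ?_, ?_⟩
  · rw [hfeq']
    exact bElem_mono le_sup_left (Set.subset_union_left.trans (subset_hull 𝒞 _))
  · rw [hgeq']
    exact bElem_mono le_sup_right (Set.subset_union_right.trans (subset_hull 𝒞 _))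

lemma omegaL_of_mem_Omega (h : IsConvex 𝒞) {A : X → L} (hA : A ∈ Omega 𝒞) :
    A ∈ omegaL L 𝒞 :=
  ⟨DSet 𝒞 A, fun _ hf => hf.1, Omega_directedOn h hA, hA.2.symm⟩

lemma sInf_mem_Omega (h : IsConvex 𝒞) {S : Set (X → L)} (hS : S ⊆ Omega 𝒞) :
    sInf S ∈ Omega 𝒞 := by
  constructor
  · intro a b C D hC hD hCne hDne ha hb hfa hfb
    refine le_sInf fun A hA => ?_
    exact (hS hA).1 a b C D hC hD hCne hDne ha hb (hfa.trans (sInf_le hA))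
      (hfb.trans (sInf_le hA))
  · refine le_antisymm (sSup_le fun f hf => hf.2) ?_
    have h1 : sInf S = ⨅ A : S, (A : X → L) := sInf_eq_iInf' S
    have h2 : ∀ A : S, (A : X → L) = ⨆ f : DSet 𝒞 (A : X → L), (f : X → L) := by
      intro A
      rw [← sSup_eq_iSup']
      exact ((hS A.2).2).symm
    calc sInf S = ⨅ A : S, ⨆ f : DSet 𝒞 (A : X → L), (f : X → L) := by
            rw [h1]; exact iInf_congr h2
      _ = ⨆ g : ∀ A : S, DSet 𝒞 (A : X → L), ⨅ A : S, ((g A : X → L)) := iInf_iSup_eq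
      _ ≤ sSup (DSet 𝒞 (sInf S)) := ?_
    refine iSup_le fun g => le_sSup ⟨?_, ?_⟩
    · -- the pointwise infimum of basic elements is basic
      have hch : ∀ A : S, ∃ a : L, ∃ C ∈ 𝒞, (g A : X → L) = bElem a C := by
        intro A
        obtain ⟨a, C, hC, heq⟩ := (g A).2.1
        exact ⟨a, C, hC, heq⟩
      choose aA CA hCA hEq using hch
      refine ⟨⨅ A : S, aA A, ⋂ A : S, CA A, ?_, ?_⟩
      · rw [← Set.sInter_range]
        refine h.2.2.1 _ ?_
        rintro K ⟨A, rfl⟩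
        exact hCA A
      · funext x
        rw [iInf_apply]
        have hval : ∀ A : S, (g A : X → L) x = aA A ⊓ chiSet (CA A) x := by
          intro A; rw [hEq A]; rfl
        rw [iInf_congr hval]
        by_cases hx : x ∈ ⋂ A : S, CA A
        · have htop : ∀ A : S, chiSet (CA A) x = (⊤ : L) := fun A => by
            simp [chiSet, Set.mem_iInter.1 hx A]
          have htop' : chiSet (⋂ A : S, CA A) x = (⊤ : L) := by
            simp only [chiSet]; rw [if_pos hx]
          rw [htop']
          rw [iInf_congr (fun A => by rw [htop A, inf_top_eq])]
          rw [inf_top_eq]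
        · obtain ⟨A₀, hA₀⟩ : ∃ A : S, x ∉ CA A := by
            simpa [Set.mem_iInter] using hx
          have hbot : chiSet (⋂ A : S, CA A) x = (⊥ : L) := by
            simp only [chiSet]; rw [if_neg hx]
          rw [hbot, inf_bot_eq]
          refine le_antisymm ((iInf_le _ A₀).trans ?_) bot_le
          simp [chiSet, hA₀]
    · exact le_sInf fun A hA => (iInf_le _ ⟨A, hA⟩).trans (g ⟨A, hA⟩).2.2

lemma dirSup_mem_Omega (h : IsConvex 𝒞) {S : Set (X → L)} (hS : S ⊆ Omega 𝒞)
    (hdir : DirectedOn (· ≤ ·) S) : sSup S ∈ Omega 𝒞 := by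
  set B := sSup S with hB
  have hQ : PropQ 𝒞 B := by
    refine le_antisymm (sSup_le fun f hf => hf.2) (sSup_le fun A hA => ?_)
    rw [← (hS hA).2]
    exact sSup_le fun f hf => le_sSup ⟨hf.1, hf.2.trans (le_sSup hA)⟩
  refine ⟨?_, hQ⟩
  intro a b C D hC hD hCne hDne ha hb hfa hfb
  -- the key pointwise-to-uniform step
  have main : ∀ (a₁ b₁ : L) (C₁ D₁ : Set X) (c₁ d₁ : L), TB c₁ a₁ → TB d₁ b₁ →
      c₁ ≠ ⊥ → d₁ ≠ ⊥ → bElem a₁ C₁ ≤ B → bElem b₁ D₁ ≤ B → D₁.Nonempty →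
      ∀ x ∈ C₁, ∃ A ∈ S, ∃ K, K ∈ 𝒞 ∧ bElem (c₁ ⊔ d₁) K ≤ A ∧ x ∈ K := by
    intro a₁ b₁ C₁ D₁ c₁ d₁ hc₁ hd₁ hc₁b hd₁b hfa₁ hfb₁ hD₁ne x hx
    obtain ⟨y₀, hy₀⟩ := hD₁ne
    obtain ⟨c₂, hcc₂, hc₂a⟩ := hc₁.interpolate
    obtain ⟨d₂, hdd₂, hd₂b⟩ := hd₁.interpolate
    have hax : a₁ ≤ B x := bElem_le_iff.1 hfa₁ x hx
    have hby : b₁ ≤ B y₀ := bElem_le_iff.1 hfb₁ y₀ hy₀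
    have hBapp : ∀ z : X, B z ≤ sSup {v | ∃ A ∈ S, A z = v} := by
      intro z
      rw [hB, sSup_apply]
      exact iSup_le fun A => le_sSup ⟨A.1, A.2, rfl⟩
    obtain ⟨v₁, ⟨A₁, hA₁, hv₁⟩, hc₂v⟩ := (hc₂a.mono_right hax) _ (hBapp x)
    obtain ⟨v₂, ⟨A₂, hA₂, hv₂⟩, hd₂v⟩ := (hd₂b.mono_right hby) _ (hBapp y₀)
    obtain ⟨E, hE, h1E, h2E⟩ := hdir A₁ hA₁ A₂ hA₂
    have hc₂E : c₂ ≤ E x := (hv₁ ▸ hc₂v).trans (h1E x)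
    have hd₂E : d₂ ≤ E y₀ := (hv₂ ▸ hd₂v).trans (h2E y₀)
    have hQE : sSup (DSet 𝒞 E) = E := (hS hE).2
    have hEapp : ∀ z : X, E z ≤ sSup {v | ∃ f ∈ DSet 𝒞 E, f z = v} := by
      intro z
      conv_lhs => rw [← hQE]
      rw [sSup_apply]
      exact iSup_le fun f => le_sSup ⟨f.1, f.2, rfl⟩
    obtain ⟨w₁, ⟨f₁, hf₁, hw₁⟩, hcw₁⟩ := (hcc₂.mono_right hc₂E) _ (hEapp x)
    obtain ⟨w₂, ⟨f₂, hf₂, hw₂⟩, hdw₂⟩ := (hdd₂.mono_right hd₂E) _ (hEapp y₀)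
    obtain ⟨e₁, K₁, hK₁, hf₁eq⟩ := hf₁.1
    obtain ⟨e₂, K₂, hK₂, hf₂eq⟩ := hf₂.1
    have hf₁eq' : f₁ = bElem e₁ K₁ := hf₁eq
    have hf₂eq' : f₂ = bElem e₂ K₂ := hf₂eq
    have hcf₁ : c₁ ≤ bElem e₁ K₁ x := by rw [← hf₁eq', hw₁]; exact hcw₁
    have hdf₂ : d₁ ≤ bElem e₂ K₂ y₀ := by rw [← hf₂eq', hw₂]; exact hdw₂
    have hxK₁ : x ∈ K₁ := by
      by_contra hxK
      rw [bElem_apply_not_mem hxK] at hcf₁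
      exact hc₁b (le_bot_iff.1 hcf₁)
    have hyK₂ : y₀ ∈ K₂ := by
      by_contra hyK
      rw [bElem_apply_not_mem hyK] at hdf₂
      exact hd₁b (le_bot_iff.1 hdf₂)
    rw [bElem_apply_mem hxK₁] at hcf₁
    rw [bElem_apply_mem hyK₂] at hdf₂
    have he₁ : e₁ ≠ ⊥ := fun hh => hc₁b (le_bot_iff.1 (hh ▸ hcf₁))
    have he₂ : e₂ ≠ ⊥ := fun hh => hd₁b (le_bot_iff.1 (hh ▸ hdf₂))
    have hPE := (hS hE).1 e₁ e₂ K₁ K₂ hK₁ hK₂ ⟨x, hxK₁⟩ ⟨y₀, hyK₂⟩ he₁ he₂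
      (hf₁eq' ▸ hf₁.2) (hf₂eq' ▸ hf₂.2)
    refine ⟨E, hE, hull 𝒞 (K₁ ∪ K₂), hull_mem h _, ?_,
      subset_hull 𝒞 _ (Or.inl hxK₁)⟩
    exact (bElem_mono (sup_le_sup hcf₁ hdf₂) subset_rfl).trans hPE
  -- PAIR: for rounded pairs, the hull bound holds
  have pair : ∀ c' d', TB c' a → TB d' b → c' ≠ ⊥ → d' ≠ ⊥ →
      bElem (c' ⊔ d') (hull 𝒞 (C ∪ D)) ≤ B := by
    intro c' d' hc' hd' hc'b hd'b
    set e := c' ⊔ d' with he_def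
    have he : e ≠ ⊥ := fun hh => hc'b (le_bot_iff.1 (hh ▸ le_sup_left))
    set 𝒮 : (X → L) → Set (Set X) := fun A => {K | K ∈ 𝒞 ∧ bElem e K ≤ A} with h𝒮
    set P : (X → L) → Set X := fun A => ⋃₀ (𝒮 A) with hP
    have hPmem : ∀ A ∈ S, P A ∈ 𝒞 := by
      intro A hA
      refine h.2.2.2 _ (fun K hK => hK.1) ?_
      intro K hK K' hK'
      rcases Set.eq_empty_or_nonempty K with rfl | hKne
      · exact ⟨K', hK', Set.empty_subset _, subset_rfl⟩
      rcases Set.eq_empty_or_nonempty K' with rfl | hK'ne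
      · exact ⟨K, hK, subset_rfl, Set.empty_subset _⟩
      have hPA := (hS hA).1 e e K K' hK.1 hK'.1 hKne hK'ne he he hK.2 hK'.2
      rw [sup_idem] at hPA
      exact ⟨hull 𝒞 (K ∪ K'), ⟨hull_mem h _, hPA⟩,
        Set.subset_union_left.trans (subset_hull 𝒞 _),
        Set.subset_union_right.trans (subset_hull 𝒞 _)⟩
    have hPmono : ∀ {A₁ A₂ : X → L}, A₁ ≤ A₂ → P A₁ ⊆ P A₂ := by
      intro A₁ A₂ h12
      exact Set.sUnion_mono fun K hK => ⟨hK.1, hK.2.trans h12⟩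
    set Pf : Set X := ⋃₀ {Q | ∃ A ∈ S, Q = P A} with hPf
    have hPfmem : Pf ∈ 𝒞 := by
      refine h.2.2.2 _ ?_ ?_
      · rintro Q ⟨A, hA, rfl⟩; exact hPmem A hA
      · rintro Q ⟨A, hA, rfl⟩ Q' ⟨A', hA', rfl⟩
        obtain ⟨E, hE, hAE, hA'E⟩ := hdir A hA A' hA'
        exact ⟨P E, ⟨E, hE, rfl⟩, hPmono hAE, hPmono hA'E⟩
    have hPfle : bElem e Pf ≤ B := by
      rw [bElem_le_iff]
      rintro x ⟨Q, ⟨A, hA, rfl⟩, ⟨K, hK, hxK⟩⟩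
      exact (bElem_le_iff.1 hK.2 x hxK).trans ((le_sSup hA : A ≤ B) x)
    have hsub : C ∪ D ⊆ Pf := by
      rintro x (hx | hx)
      · obtain ⟨A, hA, K, hK, hle, hxK⟩ :=
          main a b C D c' d' hc' hd' hc'b hd'b hfa hfb hDne x hx
        exact ⟨P A, ⟨A, hA, rfl⟩, K, ⟨hK, hle⟩, hxK⟩
      · obtain ⟨A, hA, K, hK, hle, hxK⟩ :=
          main b a D C d' c' hd' hc' hd'b hc'b hfb hfa hCne x hx
        rw [sup_comm] at hle
        exact ⟨P A, ⟨A, hA, rfl⟩, K, ⟨hK, hle⟩, hxK⟩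
    exact (bElem_mono le_rfl (hull_subset hPfmem hsub)).trans hPfle
  -- finish: decompose `a ⊔ b` by totally-below elements
  rw [bElem_le_iff]
  intro x hxh
  refine sup_le ?_ ?_
  · refine le_of_forall_TB_le fun c' hc' => ?_
    rcases eq_or_ne c' ⊥ with rfl | hc'b
    · exact bot_le
    obtain ⟨d', hd', hd'b⟩ := exists_TB_ne_bot hb
    have := bElem_le_iff.1 (pair c' d' hc' hd' hc'b hd'b) x hxh
    exact le_sup_left.trans this
  · refine le_of_forall_TB_le fun d' hd' => ?_
    rcases eq_or_ne d' ⊥ with rfl | hd'b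
    · exact bot_le
    obtain ⟨c', hc', hc'b⟩ := exists_TB_ne_bot ha
    have := bElem_le_iff.1 (pair c' d' hc' hd' hc'b hd'b) x hxh
    exact le_sup_right.trans this

lemma mem_Omega_of_omegaL (h : IsConvex 𝒞) {A : X → L} (hA : A ∈ omegaL L 𝒞) :
    A ∈ Omega 𝒞 := by
  obtain ⟨T, hTsub, hTdir, rfl⟩ := hA
  exact dirSup_mem_Omega h (fun f hf => base_subset_Omega h (hTsub hf)) hTdir

lemma const_mem_omegaL (h : IsConvex 𝒞) (a : L) :
    (fun _ : X => a) ∈ omegaL L 𝒞 := by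
  refine ⟨{bElem a Set.univ}, ?_, ?_, ?_⟩
  · intro f hf
    rw [Set.mem_singleton_iff] at hf
    exact hf ▸ bElem_mem_base h.2.1
  · rintro f hf g hg
    rw [Set.mem_singleton_iff] at hf hg
    exact ⟨bElem a Set.univ, rfl, hf ▸ le_rfl, hg ▸ le_rfl⟩
  · rw [sSup_singleton]
    funext x
    simp [bElem, chiSet]

end Omega

theorem omegaL_stratified_lconvex [CompletelyDistribLattice L]
    (𝒞 : Set (Set X)) (h : IsConvex 𝒞) :
    IsLConvex (omegaL L 𝒞) ∧ IsStratified (omegaL L 𝒞) := by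
  refine ⟨⟨const_mem_omegaL h ⊤, const_mem_omegaL h ⊥, ?_, ?_⟩,
    fun a => const_mem_omegaL h a⟩
  · intro S hS
    exact omegaL_of_mem_Omega h
      (sInf_mem_Omega h (fun A hA => mem_Omega_of_omegaL h (hS hA)))
  · intro S hS hdir
    exact omegaL_of_mem_Omega h
      (dirSup_mem_Omega h (fun A hA => mem_Omega_of_omegaL h (hS hA)) hdir)
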